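/- arXiv:1310.2437 — 11 statements merged into one kernel-verified Lean document; each statement's English description precedes it below -/
import Mathlib

section
/- Let X be an unbounded metric space, Y ⊆ X, r ≥ 0, and let q be an ultrafilter on X all of whose members are unbounded. If the r-neighborhood B(Y,r) = ⋃_{y∈Y} B(y,r) belongs to q, then there exists an ultrafilter s on X such that every member of s is unbounded, Y ∈ s, and s is parallel to q (i.e., there exists r' ≥ 0 such that B(S,r') ∈ q for every S ∈ s). -/
open Metric Bornology Set

variable {X : Type*} [MetricSpace X]

/-- `B(A,r) = ⋃_{a∈A} B(a,r)` where `B(a,r)` is the closed ball of radius `r`. -/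
def ballU (A : Set X) (r : ℝ) : Set X := ⋃ a ∈ A, Metric.closedBall a r

/-- `X^#`: the set of ultrafilters on `X` all of whose members are unbounded. -/
def sharp (X : Type*) [MetricSpace X] : Set (Ultrafilter X) :=
  {p | ∀ P ∈ p, ¬ Bornology.IsBounded P}

/-- Parallelity: `p ∥ q` iff there is `r ≥ 0` with `B(Q,r) ∈ p` for every `Q ∈ q`. -/
def Par (p q : Ultrafilter X) : Prop :=
  ∃ r : ℝ, 0 ≤ r ∧ ∀ Q ∈ q, ballU Q r ∈ p

/-- `p̆ = {q ∈ X^# : q ∥ p}`. -/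
def pbreve (p : Ultrafilter X) : Set (Ultrafilter X) :=
  {q | q ∈ sharp X ∧ Par q p}

/-- The `p`-companion `Δ_p(Y) = {q ∈ X^# : Y ∈ q, q ∥ p}`. -/
def Delta (p : Ultrafilter X) (Y : Set X) : Set (Ultrafilter X) :=
  {q | q ∈ sharp X ∧ Y ∈ q ∧ Par q p}

/-- A set `S ⊆ X^#` is invariant if `p ∈ S`, `q ∈ X^#`, `q ∥ p` imply `q ∈ S`. -/
def Invt (S : Set (Ultrafilter X)) : Prop :=
  ∀ p ∈ S, ∀ q, q ∈ sharp X → Par q p → q ∈ S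

/-- `Y` is large if `X = B(Y,r)` for some `r ≥ 0`. -/
def Large (Y : Set X) : Prop := ∃ r : ℝ, 0 ≤ r ∧ ballU Y r = Set.univ

/-- `Y` is thick if for every `r ≥ 0` there is `y ∈ Y` with `B(y,r) ⊆ Y`. -/
def Thick (Y : Set X) : Prop := ∀ r : ℝ, 0 ≤ r → ∃ y ∈ Y, Metric.closedBall y r ⊆ Y

/-- `Y` is prethick if `B(Y,r)` is thick for some `r ≥ 0`. -/
def Prethick (Y : Set X) : Prop := ∃ r : ℝ, 0 ≤ r ∧ Thick (ballU Y r)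

/-- `Y` is small if `(X∖Y) ∩ L` is large for every large `L`. -/
def SmallSet (Y : Set X) : Prop := ∀ L : Set X, Large L → Large (Yᶜ ∩ L)

/-- `Y` is thin if for each `r ≥ 0` there is a bounded `V` with
`B(y,r) ∩ Y = {y}` for all `y ∈ Y∖V`. -/
def Thin (Y : Set X) : Prop :=
  ∀ r : ℝ, 0 ≤ r → ∃ V : Set X, Bornology.IsBounded V ∧
    ∀ y ∈ Y \ V, Metric.closedBall y r ∩ Y = {y}

/-- `Y` is `n`-thin if for each `r ≥ 0` there is a bounded `V` with
`|B(y,r) ∩ Y| ≤ n` for all `y ∈ Y∖V`. -/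
def NThin (n : ℕ) (Y : Set X) : Prop :=
  ∀ r : ℝ, 0 ≤ r → ∃ V : Set X, Bornology.IsBounded V ∧
    ∀ y ∈ Y \ V, (Metric.closedBall y r ∩ Y).encard ≤ n

/-- `M` is a minimal nonempty closed invariant subset of `X^#`
(closures/closedness taken in the Stone topology on ultrafilters). -/
def MinCI (M : Set (Ultrafilter X)) : Prop :=
  M ⊆ sharp X ∧ M.Nonempty ∧ IsClosed M ∧ Invt M ∧
    ∀ S ⊆ M, S.Nonempty → IsClosed S → Invt S → S = M

theorem stmt0 (hX : ¬ Bornology.IsBounded (Set.univ : Set X))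
    (Y : Set X) (r : ℝ) (hr : 0 ≤ r) (q : Ultrafilter X) (hq : q ∈ sharp X)
    (hYq : ballU Y r ∈ q) :
    ∃ s : Ultrafilter X, s ∈ sharp X ∧ Y ∈ s ∧
      ∃ r' : ℝ, 0 ≤ r' ∧ ∀ S ∈ s, ballU S r' ∈ q := by
  classical
  have hYne : Y.Nonempty := by
    by_contra h
    rw [Set.not_nonempty_iff_eq_empty] at h
    subst h
    simp only [ballU, Set.mem_empty_iff_false, Set.iUnion_of_empty,
      Set.iUnion_empty] at hYq
    exact Ultrafilter.empty_notMem hYq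
  obtain ⟨y₀, hy₀⟩ := hYne
  set f : X → X := fun x => if h : x ∈ ballU Y r then
      (Set.mem_iUnion₂.mp h).choose else y₀ with hf
  have hfY : ∀ x ∈ ballU Y r, f x ∈ Y ∧ x ∈ Metric.closedBall (f x) r := by
    intro x hx
    simp only [hf, dif_pos hx]
    obtain ⟨hy, hx'⟩ := (Set.mem_iUnion₂.mp hx).choose_spec
    exact ⟨hy, hx'⟩
  refine ⟨Ultrafilter.map f q, ?_, ?_, r, hr, ?_⟩
  · -- sharp
    intro S hS hSb
    have hfS : f ⁻¹' S ∈ q := (Ultrafilter.mem_map).mp hS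
    have hsub : f ⁻¹' S ∩ ballU Y r ⊆ ballU S r := by
      intro x ⟨hx1, hx2⟩
      exact Set.mem_iUnion₂.mpr ⟨f x, hx1, (hfY x hx2).2⟩
    have hmem : ballU S r ∈ q :=
      q.toFilter.mem_of_superset (q.toFilter.inter_mem hfS hYq) hsub
    have hbd : Bornology.IsBounded (ballU S r) := by
      refine (hSb.cthickening (δ := r)).subset ?_
      intro x hx
      obtain ⟨a, ha, hxa⟩ := Set.mem_iUnion₂.mp hx
      exact Metric.mem_cthickening_of_dist_le x a r S ha
        (by rwa [Metric.mem_closedBall] at hxa)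
    exact hq _ hmem hbd
  · -- Y ∈ s
    refine (Ultrafilter.mem_map).mpr (q.toFilter.mem_of_superset hYq ?_)
    intro x hx
    exact (hfY x hx).1
  · -- parallel
    intro S hS
    have hfS : f ⁻¹' S ∈ q := (Ultrafilter.mem_map).mp hS
    refine q.toFilter.mem_of_superset (q.toFilter.inter_mem hfS hYq) ?_
    intro x ⟨hx1, hx2⟩
    exact Set.mem_iUnion₂.mpr ⟨f x, hx1, (hfY x hx2).2⟩
end

section
/- The parallelity relation ∥ on X^# is an equivalence relation: for p, q, s ∈ X^#, p ∥ p; if p ∥ q then q ∥ p; and if p ∥ q and q ∥ s then p ∥ s. -/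
open Metric Bornology Set

variable {X : Type*} [MetricSpace X]

lemma subset_ballU {A : Set X} {r : ℝ} (hr : 0 ≤ r) : A ⊆ ballU A r := fun a ha =>
  Set.mem_biUnion ha (Metric.mem_closedBall_self hr)

lemma ballU_mono {A B : Set X} {r : ℝ} (h : A ⊆ B) : ballU A r ⊆ ballU B r := by
  intro x hx
  rcases Set.mem_iUnion₂.1 hx with ⟨a, ha, hx⟩
  exact Set.mem_biUnion (h ha) hx

lemma ballU_ballU {A : Set X} {r s : ℝ} : ballU (ballU A s) r ⊆ ballU A (r + s) := by
  intro x hx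
  rcases Set.mem_iUnion₂.1 hx with ⟨b, hb, hx⟩
  rcases Set.mem_iUnion₂.1 hb with ⟨a, ha, hb⟩
  refine Set.mem_biUnion ha ?_
  simp only [Metric.mem_closedBall] at *
  calc dist x a ≤ dist x b + dist b a := dist_triangle _ _ _
    _ ≤ r + s := add_le_add hx hb

theorem stmt1 (hX : ¬ Bornology.IsBounded (Set.univ : Set X)) :
    (∀ p ∈ sharp X, Par p p) ∧
    (∀ p ∈ sharp X, ∀ q ∈ sharp X, Par p q → Par q p) ∧
    (∀ p ∈ sharp X, ∀ q ∈ sharp X, ∀ s ∈ sharp X, Par p q → Par q s → Par p s) := by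
  refine ⟨?_, ?_, ?_⟩
  · intro p _
    exact ⟨0, le_refl 0, fun Q hQ => Filter.mem_of_superset hQ (subset_ballU le_rfl)⟩
  · rintro p _ q _ ⟨r, hr, hB⟩
    refine ⟨r, hr, fun P hP => ?_⟩
    by_contra hc
    have hCq : (ballU P r)ᶜ ∈ q := Ultrafilter.compl_mem_iff_notMem.2 hc
    have hCp : ballU ((ballU P r)ᶜ) r ∈ p := hB _ hCq
    have : (ballU ((ballU P r)ᶜ) r) ∩ P ∈ p := Filter.inter_mem hCp hP
    rcases Ultrafilter.nonempty_of_mem this with ⟨x, hx1, hx2⟩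
    rcases Set.mem_iUnion₂.1 hx1 with ⟨c, hc2, hxc⟩
    exact hc2 (Set.mem_biUnion hx2 (by simpa [dist_comm] using hxc))
  · rintro p _ q _ s _ ⟨r₁, hr₁, h1⟩ ⟨r₂, hr₂, h2⟩
    refine ⟨r₁ + r₂, by linarith, fun S hS => ?_⟩
    exact Filter.mem_of_superset (h1 _ (h2 _ hS)) ballU_ballU
end

section
/- The closure in X^# (with respect to the Stone–Čech topology, where basic open sets are {p : A ∈ p} for A ⊆ X) of an invariant subset S of X^# is invariant. -/
open Metric Bornology Set

variable {X : Type*} [MetricSpace X]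

lemma par_symm {p q : Ultrafilter X} (h : Par p q) : Par q p := by
  obtain ⟨r, hr0, h⟩ := h
  refine ⟨r, hr0, fun A hA => ?_⟩
  by_contra hc
  rw [← Ultrafilter.compl_mem_iff_notMem] at hc
  have h2 : ballU (ballU A r)ᶜ r ∈ p := h _ hc
  have h3 : A ∩ ballU (ballU A r)ᶜ r ∈ p := p.toFilter.inter_mem hA h2
  have h4 : A ∩ ballU (ballU A r)ᶜ r = ∅ := by
    ext x
    simp only [Set.mem_inter_iff, Set.mem_empty_iff_false, iff_false, not_and]
    intro hxA hxB
    simp only [ballU, Set.mem_iUnion, Metric.mem_closedBall] at hxB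
    obtain ⟨y, hy, hd⟩ := hxB
    exact hy (Set.mem_biUnion hxA (Metric.mem_closedBall.2 (by rwa [dist_comm])))
  rw [h4] at h3
  exact p.neBot.ne (Filter.empty_mem_iff_bot.1 h3)

lemma ballU_bounded {T : Set X} (h : Bornology.IsBounded T) (r : ℝ) :
    Bornology.IsBounded (ballU T r) := by
  refine (h.cthickening (δ := r)).subset ?_
  rintro x hx
  simp only [ballU, Set.mem_iUnion, Metric.mem_closedBall] at hx
  obtain ⟨a, ha, hd⟩ := hx
  exact Metric.mem_cthickening_of_dist_le x a r T ha hd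

theorem stmt2 (hX : ¬ Bornology.IsBounded (Set.univ : Set X))
    (S : Set (Ultrafilter X)) (hS : S ⊆ sharp X) (hinv : Invt S) :
    Invt (closure S ∩ sharp X) := by
  rintro p ⟨hpc, hps⟩ q hqs hparqp
  refine ⟨?_, hqs⟩
  obtain ⟨r, hr0, hpar⟩ := par_symm hparqp
  rw [_root_.mem_closure_iff] at hpc ⊢
  intro o ho hqo
  obtain ⟨b, ⟨Q, rfl⟩, hqt, hto⟩ := ultrafilterBasis_is_basis.exists_subset_of_mem_open hqo ho
  have hQp : ballU Q r ∈ p := hpar Q hqt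
  obtain ⟨s, hs1, hsS⟩ := hpc _ (ultrafilter_isOpen_basic (ballU Q r)) hQp
  classical
  set f : X → X := fun x => if h : ∃ a, a ∈ Q ∧ dist x a ≤ r then h.choose else x with hf
  have hfmem : ∀ x ∈ ballU Q r, f x ∈ Q ∧ dist x (f x) ≤ r := by
    intro x hx
    simp only [ballU, Set.mem_iUnion, Metric.mem_closedBall] at hx
    have h : ∃ a, a ∈ Q ∧ dist x a ≤ r := by
      obtain ⟨a, ha, hd⟩ := hx; exact ⟨a, ha, hd⟩
    simp only [hf, dif_pos h]
    exact h.choose_spec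
  set t : Ultrafilter X := s.map f with ht
  have hQt : Q ∈ t := by
    rw [ht, Ultrafilter.mem_map]
    exact s.toFilter.mem_of_superset hs1 (fun x hx => (hfmem x hx).1)
  have htsharp : t ∈ sharp X := by
    intro T hT hb
    have hm : f ⁻¹' T ∩ ballU Q r ∈ s :=
      s.toFilter.inter_mem (by rwa [ht, Ultrafilter.mem_map] at hT) hs1
    refine ((hS hsS) _ hm) ((ballU_bounded hb r).subset ?_)
    rintro x ⟨hxT, hxB⟩
    obtain ⟨h1, h2⟩ := hfmem x hxB
    exact Set.mem_biUnion hxT (Metric.mem_closedBall.2 h2)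
  have htpar : Par t s := by
    refine ⟨r, hr0, fun P hP => ?_⟩
    rw [ht, Ultrafilter.mem_map]
    refine s.toFilter.mem_of_superset (s.toFilter.inter_mem hP hs1) ?_
    rintro x ⟨hxP, hxB⟩
    obtain ⟨h1, h2⟩ := hfmem x hxB
    exact Set.mem_biUnion hxP (Metric.mem_closedBall.2 (by rwa [dist_comm]))
  exact ⟨t, hto hQt, hinv s hsS t htsharp htpar⟩
end

section
/- A subset Y of an unbounded metric space X is large (i.e., X = B(Y,r) for some r ≥ 0) if and only if Δ_p(Y) = {q ∈ X^# : Y ∈ q and q ∥ p} is nonempty for every p ∈ X^#. -/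
open Metric Bornology Set

variable {X : Type*} [MetricSpace X]

theorem stmt7 (hX : ¬ Bornology.IsBounded (Set.univ : Set X)) (Y : Set X) :
    Large Y ↔ ∀ p ∈ sharp X, (Delta p Y).Nonempty := by
  constructor
  · rintro ⟨r, hr0, hr⟩ p hp
    -- choose a retraction onto Y
    have hmem : ∀ x : X, ∃ y ∈ Y, x ∈ Metric.closedBall y r := by
      intro x
      have : x ∈ ballU Y r := by rw [hr]; trivial
      simpa [ballU, Set.mem_iUnion₂] using this
    choose f hfY hfb using hmem
    refine ⟨p.map f, ?_, ?_, ?_⟩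
    · intro Q hQ hQb
      have hpre : f ⁻¹' Q ∈ p := hQ
      rcases Y.eq_empty_or_nonempty with hY | ⟨y0, hy0⟩
      · exact hp _ hpre (by
          have : f ⁻¹' Q = ∅ := by
            ext x; simp only [Set.mem_preimage, Set.mem_empty_iff_false, iff_false]
            intro hx
            exact absurd (hfY x) (by simp [hY])
          rw [this]; exact Bornology.isBounded_empty)
      · rcases (Metric.isBounded_iff_subset_closedBall y0).1 hQb with ⟨m, hm⟩
        refine hp _ hpre ?_
        have : f ⁻¹' Q ⊆ Metric.closedBall y0 (m + r) := by
          intro x hx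
          have h1 : dist x (f x) ≤ r := by
            have := hfb x; simpa [Metric.mem_closedBall] using this
          have h2 : dist (f x) y0 ≤ m := hm hx
          simp only [Metric.mem_closedBall]
          calc dist x y0 ≤ dist x (f x) + dist (f x) y0 := dist_triangle _ _ _
            _ ≤ r + m := add_le_add h1 h2
            _ = m + r := by ring
        exact (Metric.isBounded_closedBall).subset this
    · have : Set.univ ⊆ f ⁻¹' Y := fun x _ => hfY x
      exact Ultrafilter.mem_map.2 (Filter.mem_of_superset Filter.univ_mem this)
    · refine ⟨r, hr0, fun Q hQ => ?_⟩
      have : Q ⊆ f ⁻¹' (ballU Q r) := by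
        intro x hx
        have h1 : dist x (f x) ≤ r := by
          have := hfb x; simpa [Metric.mem_closedBall] using this
        simp only [Set.mem_preimage, ballU, Set.mem_iUnion₂]
        exact ⟨x, hx, by simpa [Metric.mem_closedBall, dist_comm] using h1⟩
      exact Ultrafilter.mem_map.2 (Filter.mem_of_superset hQ this)
  · intro h
    by_contra hL
    -- X is nonempty
    have hXne : Nonempty X := by
      by_contra hne
      exact hX (by
        have : (Set.univ : Set X) = ∅ := by
          ext x; exact absurd ⟨x⟩ hne
        rw [this]; exact Bornology.isBounded_empty)
    obtain ⟨x₀⟩ := hXne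
    set D : ℕ → Set X := fun n => (ballU Y n)ᶜ ∩ (Metric.closedBall x₀ n)ᶜ with hD
    -- ballU is monotone in the radius
    have hballU_mono : ∀ (A : Set X) (a b : ℝ), a ≤ b → ballU A a ⊆ ballU A b := by
      intro A a b hab x hx
      simp only [ballU, Set.mem_iUnion₂] at hx ⊢
      obtain ⟨y, hy, hxy⟩ := hx
      exact ⟨y, hy, Metric.closedBall_subset_closedBall hab hxy⟩
    have hDanti : ∀ m n : ℕ, m ≤ n → D n ⊆ D m := by
      intro m n hmn x hx
      obtain ⟨h1, h2⟩ := hx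
      refine ⟨fun hc => h1 (hballU_mono Y m n (by exact_mod_cast hmn) hc),
        fun hc => h2 (Metric.closedBall_subset_closedBall (by exact_mod_cast hmn) hc)⟩
    have hDne : ∀ n : ℕ, (D n).Nonempty := by
      intro n
      by_contra hne
      rw [Set.not_nonempty_iff_eq_empty] at hne
      have hsub : (ballU Y n)ᶜ ⊆ Metric.closedBall x₀ n := by
        intro x hx
        by_contra hc
        have hxd : x ∈ D n := ⟨hx, hc⟩
        rw [hne] at hxd
        exact hxd
      rcases Y.eq_empty_or_nonempty with hY | ⟨y0, hy0⟩
      · apply hX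
        have : (Set.univ : Set X) ⊆ Metric.closedBall x₀ n := by
          intro x _
          apply hsub
          simp [ballU, hY]
        exact Metric.isBounded_closedBall.subset this
      · apply hL
        refine ⟨(n : ℝ) + dist x₀ y0, by positivity, ?_⟩
        apply Set.eq_univ_of_univ_subset
        intro x _
        by_cases hx : x ∈ ballU Y n
        · exact hballU_mono Y n _ (le_add_of_nonneg_right dist_nonneg) hx
        · have hx' : dist x x₀ ≤ n := hsub hx
          simp only [ballU, Set.mem_iUnion₂]
          refine ⟨y0, hy0, ?_⟩
          simp only [Metric.mem_closedBall]
          calc dist x y0 ≤ dist x x₀ + dist x₀ y0 := dist_triangle _ _ _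
            _ ≤ n + dist x₀ y0 := by linarith
    have hdir : Directed (· ⊇ ·) D := fun m n =>
      ⟨max m n, hDanti m _ (le_max_left m n), hDanti n _ (le_max_right m n)⟩
    set F : Filter X := ⨅ n : ℕ, Filter.principal (D n) with hF
    have hbasis : F.HasBasis (fun _ : ℕ => True) D :=
      Filter.hasBasis_iInf_principal hdir
    have hFne : F.NeBot := hbasis.neBot_iff.2 (fun {n} _ => hDne n)
    set p : Ultrafilter X := @Ultrafilter.of X F hFne with hpdef
    have hple : (p : Filter X) ≤ F := Ultrafilter.of_le F
    have hDp : ∀ n : ℕ, D n ∈ p := by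
      intro n
      exact hple (hbasis.mem_of_mem trivial)
    have hpsharp : p ∈ sharp X := by
      intro P hP hPb
      rcases (Metric.isBounded_iff_subset_closedBall x₀).1 hPb with ⟨m, hm⟩
      set n : ℕ := ⌈m⌉₊
      have hmn : m ≤ (n : ℝ) := Nat.le_ceil m
      have hint : P ∩ D n ∈ p := Filter.inter_mem hP (hDp n)
      obtain ⟨x, hxP, _, hx2⟩ := Filter.nonempty_of_mem hint
      exact hx2 (Metric.closedBall_subset_closedBall hmn (hm hxP))
    obtain ⟨q, hq, hYq, s, hs0, hpar⟩ := h p hpsharp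
    set n : ℕ := ⌈s⌉₊
    have hsn : s ≤ (n : ℝ) := Nat.le_ceil s
    have h1 : ballU (D n) s ∈ q := hpar (D n) (hDp n)
    have h2 : Y ∩ ballU (D n) s ∈ q := Filter.inter_mem hYq h1
    obtain ⟨z, hzY, hzb⟩ := Filter.nonempty_of_mem h2
    simp only [ballU, Set.mem_iUnion₂] at hzb
    obtain ⟨x, hxD, hzx⟩ := hzb
    apply hxD.1
    simp only [ballU, Set.mem_iUnion₂]
    refine ⟨z, hzY, ?_⟩
    simp only [Metric.mem_closedBall] at hzx ⊢
    calc dist x z = dist z x := dist_comm _ _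
      _ ≤ s := hzx
      _ ≤ n := hsn
end

section
/- A subset Y of X is thick (for every r ≥ 0 there exists y ∈ Y with B(y,r) ⊆ Y) if and only if there exists p ∈ X^# such that p̆ = Δ_p(Y), i.e., every ultrafilter parallel to p contains Y. -/
open Metric Bornology Set

variable {X : Type*} [MetricSpace X]

theorem stmt8 (hX : ¬ Bornology.IsBounded (Set.univ : Set X)) (Y : Set X) :
    Thick Y ↔ ∃ p ∈ sharp X, pbreve p = Delta p Y := by
  have hne : Nonempty X := by
    by_contra h
    have : IsEmpty X := not_nonempty_iff.1 h
    apply hX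
    rw [Set.univ_eq_empty_iff.2 this]
    exact Bornology.isBounded_empty
  have hsharp_of : ∀ (F : Filter X), F ≤ Bornology.cobounded X → [F.NeBot] →
      Ultrafilter.of F ∈ sharp X := by
    intro F hF _ P hP hbd
    have hc : Pᶜ ∈ Ultrafilter.of F :=
      (Ultrafilter.of_le F) (hF (Bornology.isBounded_def.1 hbd))
    exact (Ultrafilter.compl_notMem_iff.2 hP) hc
  constructor
  · intro hT
    by_cases hY : Y = Set.univ
    · have hnb : (Bornology.cobounded X).NeBot := by
        rw [← Filter.forall_mem_nonempty_iff_neBot]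
        intro s hs
        rcases s.eq_empty_or_nonempty with h | h
        · exfalso; apply hX
          rw [Bornology.isBounded_def]
          simpa [h] using hs
        · exact h
      refine ⟨Ultrafilter.of (Bornology.cobounded X), hsharp_of _ le_rfl, ?_⟩
      subst hY
      ext q
      simp only [pbreve, Delta, Set.mem_setOf_eq]
      exact ⟨fun ⟨a, b⟩ => ⟨a, Filter.univ_mem, b⟩, fun ⟨a, _, b⟩ => ⟨a, b⟩⟩
    · set C : ℕ → Set X := fun n => {y | Metric.closedBall y n ⊆ Y} with hCdef
      have hCmono : ∀ {m n : ℕ}, m ≤ n → C n ⊆ C m := by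
        intro m n hmn y hy
        exact (Metric.closedBall_subset_closedBall (by exact_mod_cast hmn)).trans hy
      have hCne : ∀ n : ℕ, (C n).Nonempty := by
        intro n
        obtain ⟨y, _, hy⟩ := hT n (Nat.cast_nonneg n)
        exact ⟨y, hy⟩
      have hCub : ∀ n : ℕ, ¬ Bornology.IsBounded (C n) := by
        intro n hbd
        apply hY
        obtain ⟨c⟩ := hne
        obtain ⟨R, hR⟩ := hbd.subset_closedBall c
        ext x
        simp only [Set.mem_univ, iff_true]
        obtain ⟨m, hm⟩ := exists_nat_ge (max (n : ℝ) (dist x c + R))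
        obtain ⟨y, hy⟩ := hCne m
        have hyn : y ∈ C n := hCmono (Nat.cast_le.1 ((le_max_left _ _).trans hm)) hy
        have hyc : y ∈ Metric.closedBall c R := hR hyn
        have : dist x y ≤ (m : ℝ) := by
          calc dist x y ≤ dist x c + dist c y := dist_triangle _ _ _
            _ ≤ dist x c + R := by
                have := Metric.mem_closedBall.1 hyc
                rw [dist_comm] at this; linarith
            _ ≤ m := (le_max_right _ _).trans hm
        exact hy (Metric.mem_closedBall.2 this)
      set F : Filter X := Bornology.cobounded X ⊓ ⨅ n : ℕ, Filter.principal (C n) with hFdef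
      have hdir : Directed (· ≥ ·) (fun n : ℕ => Filter.principal (C n)) := by
        intro a b
        exact ⟨max a b, Filter.principal_mono.2 (hCmono (le_max_left _ _)),
          Filter.principal_mono.2 (hCmono (le_max_right _ _))⟩
      have hFne : F.NeBot := by
        rw [← Filter.forall_mem_nonempty_iff_neBot]
        intro s hs
        rw [hFdef, Filter.mem_inf_iff] at hs
        obtain ⟨t₁, ht₁, t₂, ht₂, rfl⟩ := hs
        rw [Filter.mem_iInf_of_directed hdir] at ht₂
        obtain ⟨n, hn⟩ := ht₂
        rw [Filter.mem_principal] at hn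
        have hnb : ¬ (C n ⊆ t₁ᶜ) := by
          intro hsub
          exact hCub n ((Bornology.IsBounded.subset · hsub) (Bornology.isBounded_compl_iff.2 ht₁))
        obtain ⟨y, hy, hyt⟩ := Set.not_subset.1 hnb
        exact ⟨y, by simpa using hyt, hn hy⟩
      have hCp : ∀ n : ℕ, C n ∈ Ultrafilter.of F := by
        intro n
        refine (Ultrafilter.of_le F) ?_
        exact Filter.mem_inf_of_right (Filter.mem_iInf_of_mem n (Filter.mem_principal_self _))
      refine ⟨Ultrafilter.of F, hsharp_of F inf_le_left, ?_⟩
      ext q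
      simp only [pbreve, Delta, Set.mem_setOf_eq]
      refine ⟨fun ⟨hqs, hqp⟩ => ⟨hqs, ?_, hqp⟩, fun ⟨a, _, b⟩ => ⟨a, b⟩⟩
      obtain ⟨r, hr0, hrQ⟩ := hqp
      obtain ⟨n, hn⟩ := exists_nat_ge r
      have hb : ballU (C n) r ∈ q := hrQ _ (hCp n)
      refine Filter.mem_of_superset hb ?_
      refine Set.iUnion₂_subset fun y hy => ?_
      exact (Metric.closedBall_subset_closedBall hn).trans hy
  · rintro ⟨p, hp, heq⟩ r hr
    by_contra hcon
    push_neg at hcon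
    have hsel : ∀ y : X, ∃ z : X, dist y z ≤ r ∧ z ∉ Y := by
      intro y
      by_cases hy : y ∈ Y
      · obtain ⟨z, hz, hzY⟩ := Set.not_subset.1 (hcon y hy)
        exact ⟨z, Metric.mem_closedBall'.1 hz, hzY⟩
      · exact ⟨y, by simp [hr], hy⟩
    choose f hf1 hf2 using hsel
    set q : Ultrafilter X := p.map f with hq
    have hqs : q ∈ sharp X := by
      intro P hP hbd
      have hmem : f ⁻¹' P ∈ p := hP
      have hsub : f ⁻¹' P ⊆ ballU P r := by
        intro y hy
        exact Set.mem_iUnion₂.2 ⟨f y, hy, Metric.mem_closedBall.2 (hf1 y)⟩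
      have hbd2 : Bornology.IsBounded (ballU P r) := by
        refine Bornology.IsBounded.subset (hbd.cthickening (δ := r)) ?_
        refine Set.iUnion₂_subset fun a ha => ?_
        exact Metric.closedBall_subset_cthickening ha r
      exact hp _ hmem (hbd2.subset hsub)
    have hqpar : Par q p := by
      refine ⟨r, hr, fun Q hQ => ?_⟩
      show f ⁻¹' (ballU Q r) ∈ p
      refine Filter.mem_of_superset hQ fun y hy => ?_
      exact Set.mem_iUnion₂.2 ⟨y, hy, Metric.mem_closedBall'.2 (hf1 y)⟩
    have hqin : q ∈ pbreve p := ⟨hqs, hqpar⟩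
    rw [heq] at hqin
    have hYq : Y ∈ q := hqin.2.1
    have : f ⁻¹' Y ∈ p := hYq
    have hempty : f ⁻¹' Y = ∅ := by
      ext y; simp [hf2 y]
    rw [hempty] at this
    exact Ultrafilter.empty_notMem this
end

section
/- A subset Y of X is prethick if and only if there exist p ∈ X^# and r ≥ 0 such that every ultrafilter parallel to p contains B(Y,r), i.e., p̆ = Δ_p(B(Y,r)). -/
open Metric Bornology Set

variable {X : Type*} [MetricSpace X]

theorem isBounded_ballU {Q : Set X} (hQ : Bornology.IsBounded Q) (r : ℝ)
    (hne : Nonempty X) : Bornology.IsBounded (ballU Q r) := by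
  obtain ⟨c⟩ := hne
  obtain ⟨s, hs⟩ := (Metric.isBounded_iff_subset_closedBall c).1 hQ
  refine (Metric.isBounded_closedBall (x := c) (r := s + r)).subset ?_
  rintro x hx
  simp only [ballU, Set.mem_iUnion] at hx
  obtain ⟨a, ha, hxa⟩ := hx
  have h1 : dist a c ≤ s := hs ha
  have h2 : dist x a ≤ r := hxa
  exact Metric.mem_closedBall.2 ((dist_triangle x a c).trans (by linarith))

theorem sharp_of_cobounded_le {p : Ultrafilter X}
    (h : (p : Filter X) ≤ Bornology.cobounded X) : p ∈ sharp X := by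
  intro P hP hb
  have hb' : Bornology.IsCobounded Pᶜ := by rwa [← Bornology.isBounded_compl_iff, compl_compl]
  have : Pᶜ ∈ p := h (Bornology.isCobounded_def.1 hb')
  have := p.toFilter.inter_sets hP this
  simp only [Set.inter_compl_self] at this
  exact (Ultrafilter.neBot p).ne (Filter.empty_mem_iff_bot.1 this)

theorem thick_iff_key (hX : ¬ Bornology.IsBounded (Set.univ : Set X)) (Z : Set X) :
    Thick Z ↔ ∃ p ∈ sharp X, pbreve p = Delta p Z := by
  have hne : Nonempty X := by
    by_contra h
    rw [not_nonempty_iff] at h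
    have : (Set.univ : Set X) = ∅ := Set.univ_eq_empty_iff.2 h
    exact hX (this ▸ Bornology.isBounded_empty)
  have hcb : (Bornology.cobounded X).NeBot := by
    refine Filter.forall_mem_nonempty_iff_neBot.1 ?_
    intro s hs
    rcases s.eq_empty_or_nonempty with h | h
    · exact absurd (by simpa [h] using (Bornology.isCobounded_def.2 hs).compl) hX
    · exact h
  constructor
  · intro hZ
    set C : ℕ → Set X := fun n => {y | Metric.closedBall y (n : ℝ) ⊆ Z} with hC
    have hCanti : ∀ {m n : ℕ}, m ≤ n → C n ⊆ C m := by
      intro m n hmn y hy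
      exact (Metric.closedBall_subset_closedBall (by exact_mod_cast hmn)).trans hy
    have hball : ∀ (s : ℝ), 0 ≤ s → ballU (C ⌈s⌉₊) s ⊆ Z := by
      intro s hs x hx
      simp only [ballU, Set.mem_iUnion] at hx
      obtain ⟨a, ha, hxa⟩ := hx
      exact ha (Metric.closedBall_subset_closedBall (Nat.le_ceil s) hxa)
    by_cases hub : ∀ n : ℕ, ¬ Bornology.IsBounded (C n)
    · set D : ℕ → Filter X := fun n => Bornology.cobounded X ⊓ Filter.principal (C n) with hD
      have hDne : ∀ n, (D n).NeBot := by
        intro n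
        refine Filter.inf_principal_neBot_iff.2 ?_
        intro U hU
        by_contra h
        rw [Set.not_nonempty_iff_eq_empty] at h
        refine hub n (((Bornology.isCobounded_def.2 hU).compl).subset ?_)
        exact Set.subset_compl_iff_disjoint_left.2 (Set.disjoint_iff_inter_eq_empty.2 h)
      have hdir : Directed (· ≥ ·) D := by
        intro m n
        exact ⟨max m n, inf_le_inf le_rfl (Filter.principal_mono.2 (hCanti (le_max_left m n))),
          inf_le_inf le_rfl (Filter.principal_mono.2 (hCanti (le_max_right m n)))⟩
      have hFne : (⨅ n, D n).NeBot := Filter.iInf_neBot_of_directed hdir hDne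
      set p : Ultrafilter X := Ultrafilter.of (⨅ n, D n) with hp
      have hle : (p : Filter X) ≤ ⨅ n, D n := Ultrafilter.of_le _
      have hpsharp : p ∈ sharp X :=
        sharp_of_cobounded_le (hle.trans ((iInf_le D 0).trans inf_le_left))
      have hCp : ∀ n, C n ∈ p := fun n =>
        hle (Filter.mem_iInf_of_mem n (Filter.mem_inf_of_right (Filter.mem_principal_self _)))
      refine ⟨p, hpsharp, ?_⟩
      ext q
      constructor
      · rintro ⟨hq, s, hs, hpar⟩
        refine ⟨hq, ?_, s, hs, hpar⟩
        exact Filter.mem_of_superset (hpar _ (hCp ⌈s⌉₊)) (hball s hs)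
      · rintro ⟨hq, _, hpar⟩
        exact ⟨hq, hpar⟩
    · push_neg at hub
      obtain ⟨R, hR⟩ := hub
      have hZuniv : Z = Set.univ := by
        ext x
        simp only [Set.mem_univ, iff_true]
        obtain ⟨s, hs⟩ := (Metric.isBounded_iff_subset_closedBall x).1 hR
        set r : ℝ := max (R : ℝ) (max s 0) with hr
        obtain ⟨y, _, hy⟩ := hZ r (le_max_of_le_right (le_max_right _ _))
        have hyC : y ∈ {y | Metric.closedBall y (R : ℝ) ⊆ Z} := fun z hz =>
          hy (Metric.closedBall_subset_closedBall (le_max_left _ _) hz)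
        have hd : dist x y ≤ r := by
          have := hs hyC
          rw [dist_comm]
          exact le_trans this (le_max_of_le_right (le_max_left _ _))
        exact hy (Metric.mem_closedBall.2 hd)
      set p : Ultrafilter X := Ultrafilter.of (Bornology.cobounded X) with hp
      have hpsharp : p ∈ sharp X := sharp_of_cobounded_le (Ultrafilter.of_le _)
      refine ⟨p, hpsharp, ?_⟩
      ext q
      exact ⟨fun ⟨hq, hpar⟩ => ⟨hq, by rw [hZuniv]; exact Filter.univ_mem, hpar⟩, fun ⟨hq, _, hpar⟩ => ⟨hq, hpar⟩⟩
  · rintro ⟨p, hp, hpq⟩ r hr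
    by_contra h
    push_neg at h
    have hch : ∀ y : X, ∃ x, x ∈ Metric.closedBall y r ∧ x ∉ Z := by
      intro y
      by_cases hy : y ∈ Z
      · obtain ⟨x, hx1, hx2⟩ := Set.not_subset.1 (h y hy)
        exact ⟨x, hx1, hx2⟩
      · exact ⟨y, Metric.mem_closedBall.2 (by simpa using hr), hy⟩
    choose f hf1 hf2 using hch
    set q : Ultrafilter X := p.map f with hq
    have hne : Nonempty X := by
      by_contra hn
      rw [not_nonempty_iff] at hn
      have : (Set.univ : Set X) = ∅ := Set.univ_eq_empty_iff.2 hn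
      exact hX (this ▸ Bornology.isBounded_empty)
    have hqsharp : q ∈ sharp X := by
      intro Q hQ hb
      refine hp (f ⁻¹' Q) (Ultrafilter.mem_map.1 hQ) ?_
      refine (isBounded_ballU hb r hne).subset ?_
      intro y hy
      simp only [ballU, Set.mem_iUnion]
      exact ⟨f y, hy, Metric.mem_closedBall.2 (by rw [dist_comm]; exact hf1 y)⟩
    have hpar : Par q p := by
      refine ⟨r, hr, fun P hP => ?_⟩
      rw [hq, Ultrafilter.mem_map]
      refine Filter.mem_of_superset hP ?_
      intro y hy
      show f y ∈ ballU P r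
      simp only [ballU, Set.mem_iUnion]
      exact ⟨y, hy, hf1 y⟩
    have hmem : q ∈ Delta p Z := hpq ▸ (⟨hqsharp, hpar⟩ : q ∈ pbreve p)
    obtain ⟨_, hZq, _⟩ := hmem
    have hZp : f ⁻¹' Z ∈ p := Ultrafilter.mem_map.1 hZq
    have hempty : f ⁻¹' Z = ∅ := by
      ext y; simp [hf2 y]
    rw [hempty] at hZp
    exact hp ∅ hZp Bornology.isBounded_empty

theorem stmt9 (hX : ¬ Bornology.IsBounded (Set.univ : Set X)) (Y : Set X) :
    Prethick Y ↔ ∃ p ∈ sharp X, ∃ r : ℝ, 0 ≤ r ∧ pbreve p = Delta p (ballU Y r) := by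
  constructor
  · rintro ⟨r, hr, hth⟩
    obtain ⟨p, hp, heq⟩ := (thick_iff_key hX _).1 hth
    exact ⟨p, hp, r, hr, heq⟩
  · rintro ⟨p, hp, r, hr, heq⟩
    exact ⟨r, hr, (thick_iff_key hX _).2 ⟨p, hp, heq⟩⟩
end

section
/- A subset Y of X is small if and only if for every p ∈ X^# and every r ≥ 0, p̆ ≠ Δ_p(B(Y,r)), i.e., there exists an ultrafilter parallel to p not containing B(Y,r). -/
open Metric Bornology Set

variable {X : Type*} [MetricSpace X]

lemma mem_ballU {A : Set X} {r : ℝ} {x : X} : x ∈ ballU A r ↔ ∃ a ∈ A, dist x a ≤ r := by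
  simp [ballU, mem_closedBall]

lemma isBounded_ballU_s10 {Q : Set X} {t : ℝ} (h : IsBounded Q) : IsBounded (ballU Q t) := by
  rcases Q.eq_empty_or_nonempty with hQ | ⟨x₀, _⟩
  · simp [hQ, ballU]
  · obtain ⟨R, hR⟩ := (isBounded_iff_subset_closedBall x₀).1 h
    refine (isBounded_closedBall (x := x₀) (r := t + R)).subset ?_
    intro z hz
    rcases mem_ballU.1 hz with ⟨a, ha, hd⟩
    have h2 : dist a x₀ ≤ R := hR ha
    have : dist z x₀ ≤ t + R :=
      le_trans (dist_triangle z a x₀) (add_le_add hd h2)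
    simpa [mem_closedBall] using this

lemma sharp_of_cobounded {q : Ultrafilter X} (h : ∀ W : Set X, IsBounded W → Wᶜ ∈ q) :
    q ∈ sharp X := fun P hP hPb =>
  (Ultrafilter.compl_mem_iff_notMem.1 (h P hPb)) hP

lemma small_iff_np (hX : ¬ Bornology.IsBounded (Set.univ : Set X)) (Y : Set X) :
    SmallSet Y ↔ ∀ r : ℝ, 0 ≤ r → Large ((ballU Y r)ᶜ) := by
  constructor
  · intro hs r hr
    have hLarge : Large (Y ∪ (ballU Y r)ᶜ) := by
      refine ⟨r, hr, eq_univ_iff_forall.2 fun x => ?_⟩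
      by_cases hx : x ∈ ballU Y r
      · rcases mem_ballU.1 hx with ⟨a, ha, hd⟩
        exact mem_ballU.2 ⟨a, Or.inl ha, hd⟩
      · exact mem_ballU.2 ⟨x, Or.inr hx, by simpa using hr⟩
    have heq : Yᶜ ∩ (Y ∪ (ballU Y r)ᶜ) = (ballU Y r)ᶜ := by
      ext x
      constructor
      · rintro ⟨hxc, hx | hx⟩
        · exact absurd hx hxc
        · exact hx
      · intro hx
        refine ⟨fun hxY => hx (mem_ballU.2 ⟨x, hxY, by simpa using hr⟩), Or.inr hx⟩
    have := hs _ hLarge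
    rwa [heq] at this
  · intro hnp L hL
    rcases hL with ⟨t, ht, hLt⟩
    rcases hnp t ht with ⟨s, hs, hBs⟩
    refine ⟨s + t, by positivity, eq_univ_iff_forall.2 fun x => ?_⟩
    have hx : x ∈ ballU ((ballU Y t)ᶜ) s := hBs ▸ mem_univ x
    rcases mem_ballU.1 hx with ⟨z, hz, hxz⟩
    have hzL : z ∈ ballU L t := hLt ▸ mem_univ z
    rcases mem_ballU.1 hzL with ⟨y, hy, hzy⟩
    have hyY : y ∉ Y := fun hyY => hz (mem_ballU.2 ⟨y, hyY, hzy⟩)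
    exact mem_ballU.2 ⟨y, ⟨hyY, hy⟩, le_trans (dist_triangle x z y)
      (add_le_add hxz hzy)⟩

theorem stmt10 (hX : ¬ Bornology.IsBounded (Set.univ : Set X)) (Y : Set X) :
    SmallSet Y ↔ ∀ p ∈ sharp X, ∀ r : ℝ, 0 ≤ r → pbreve p ≠ Delta p (ballU Y r) := by
  constructor
  · -- forward
    intro hs p hp r hr
    set B := ballU Y r with hB
    obtain ⟨t, ht, hBt⟩ := (small_iff_np hX Y).1 hs r hr
    have hc : ∀ x : X, ∃ z, z ∈ Bᶜ ∧ dist x z ≤ t := by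
      intro x
      have hx : x ∈ ballU Bᶜ t := hBt ▸ mem_univ x
      rcases mem_ballU.1 hx with ⟨z, hz, hd⟩
      exact ⟨z, hz, hd⟩
    choose c hc1 hc2 using hc
    set q := Ultrafilter.map c p with hq
    intro heq
    have hqsharp : q ∈ sharp X := by
      intro Q hQ hQb
      have hpre : c ⁻¹' Q ∈ p := Ultrafilter.mem_map.1 hQ
      refine hp _ hpre ?_
      refine (isBounded_ballU_s10 (t := t) hQb).subset fun x hx => ?_
      exact mem_ballU.2 ⟨c x, hx, hc2 x⟩
    have hpar : Par q p := by
      refine ⟨t, ht, fun P hP => Ultrafilter.mem_map.2 ?_⟩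
      refine Filter.mem_of_superset hP fun x hx => ?_
      exact mem_ballU.2 ⟨x, hx, by rw [dist_comm]; exact hc2 x⟩
    have hBc : Bᶜ ∈ q := Ultrafilter.mem_map.2 (by
      refine Filter.mem_of_superset Filter.univ_mem fun x _ => hc1 x)
    have hqD : q ∈ Delta p B := heq ▸ (⟨hqsharp, hpar⟩ : q ∈ pbreve p)
    exact (Ultrafilter.compl_mem_iff_notMem.1 hBc) hqD.2.1
  · -- backward
    intro h
    by_contra hns
    obtain ⟨r, hr, hnB⟩ : ∃ r : ℝ, 0 ≤ r ∧ ¬ Large ((ballU Y r)ᶜ) := by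
      by_contra h'
      push_neg at h'
      exact hns ((small_iff_np hX Y).2 h')
    set B := ballU Y r with hB
    set T : ℝ → Set X := fun s => {x | Metric.closedBall x s ⊆ B} with hT
    have hthick : ∀ t : ℝ, 0 ≤ t → ∃ z, z ∈ T t := by
      intro t ht
      by_contra hno
      push_neg at hno
      refine hnB ⟨t, ht, eq_univ_iff_forall.2 fun x => ?_⟩
      rcases not_subset.1 (hno x) with ⟨w, hw, hwB⟩
      exact mem_ballU.2 ⟨w, hwB, by rw [dist_comm]; exact mem_closedBall.1 hw⟩
    have hTanti : ∀ {s t : ℝ}, s ≤ t → T t ⊆ T s := fun hst x hx =>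
      (closedBall_subset_closedBall hst).trans hx
    have hne : Nonempty X := by
      by_contra hE
      rw [not_nonempty_iff] at hE
      exact hX (by rw [eq_empty_of_isEmpty (univ : Set X)]; exact isBounded_empty)
    obtain ⟨x₀⟩ := hne
    have hTunb : ∀ s : ℝ, ¬ IsBounded (T s) := by
      intro s hbs
      obtain ⟨R, hR⟩ := (isBounded_iff_subset_closedBall x₀).1 hbs
      have hR' : T s ⊆ Metric.closedBall x₀ (max R 0) :=
        hR.trans (closedBall_subset_closedBall (le_max_left _ _))
      have hBuniv : B = univ := by
        refine eq_univ_iff_forall.2 fun y => ?_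
        set t : ℝ := max R 0 + dist y x₀ + max s 0 with htdef
        have ht0 : 0 ≤ t := by positivity
        obtain ⟨z, hz⟩ := hthick t ht0
        have hst : s ≤ t := by
          have h1 : (0:ℝ) ≤ max R 0 := le_max_right _ _
          have h2 : (0:ℝ) ≤ dist y x₀ := dist_nonneg
          have h3 : s ≤ max s 0 := le_max_left _ _
          simp only [htdef]; linarith
        have hz' : z ∈ T s := hTanti hst hz
        have hzx : dist z x₀ ≤ max R 0 := hR' hz'
        refine hz (mem_closedBall.2 ?_)
        calc dist y z ≤ dist y x₀ + dist x₀ z := dist_triangle _ _ _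
          _ ≤ dist y x₀ + max R 0 := by rw [dist_comm x₀ z]; exact add_le_add_right hzx _
          _ ≤ t := by have h4 : (0:ℝ) ≤ max s 0 := le_max_right _ _; simp only [htdef]; linarith
      have hTu : T s = univ := eq_univ_iff_forall.2 fun x => by
        simp only [hT, mem_setOf_eq, hBuniv]; exact subset_univ _
      exact hX (hTu ▸ hbs)
    have hdir : Directed (· ≥ ·) (fun s : ℝ => Filter.principal (T s)) := by
      intro s t
      exact ⟨max s t, Filter.principal_mono.2 (hTanti (le_max_left _ _)),
        Filter.principal_mono.2 (hTanti (le_max_right _ _))⟩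
    set F : Filter X := (⨅ s : ℝ, Filter.principal (T s)) ⊓ Bornology.cobounded X with hF
    have hFne : F.NeBot := by
      rw [Filter.neBot_iff]
      intro hbot
      have h0 : (∅ : Set X) ∈ F := by rw [hbot]; exact Filter.mem_bot
      rcases Filter.mem_inf_iff.1 h0 with ⟨A, hA, C, hC, hAC⟩
      rcases (Filter.mem_iInf_of_directed hdir A).1 hA with ⟨s, hAs⟩
      have hCc : IsBounded Cᶜ := isBounded_def.2 (by rwa [compl_compl])
      have hsub : T s ⊆ Cᶜ := by
        intro x hx hxC
        have hxAC : x ∈ A ∩ C := ⟨hAs hx, hxC⟩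
        rw [← hAC] at hxAC
        exact hxAC
      exact hTunb s (hCc.subset hsub)
    haveI := hFne
    set p := Ultrafilter.of F with hp
    have hle : (p : Filter X) ≤ F := Ultrafilter.of_le F
    have hmem : ∀ S : Set X, S ∈ F → S ∈ p := fun S hS => hle hS
    have hpsharp : p ∈ sharp X := sharp_of_cobounded fun W hW =>
      hmem _ (Filter.mem_inf_of_right (isBounded_def.1 hW))
    have hTp : ∀ s : ℝ, T s ∈ p := fun s =>
      hmem _ (Filter.mem_inf_of_left (Filter.mem_iInf_of_mem s (Filter.mem_principal_self _)))
    refine h p hpsharp r hr ?_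
    ext q
    simp only [pbreve, Delta, mem_setOf_eq]
    constructor
    · rintro ⟨hq, hpar⟩
      refine ⟨hq, ?_, hpar⟩
      rcases hpar with ⟨t, ht, hQ⟩
      have hball : ballU (T t) t ∈ q := hQ (T t) (hTp t)
      refine Filter.mem_of_superset hball fun z hz => ?_
      rcases mem_ballU.1 hz with ⟨x, hx, hd⟩
      exact hx (mem_closedBall.2 hd)
    · rintro ⟨hq, _, hpar⟩
      exact ⟨hq, hpar⟩
end

section
/- The family of all small subsets of an unbounded metric space X is an ideal in the Boolean algebra of all subsets of X: subsets of small sets are small and the union of two small sets is small. -/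
open Metric Bornology Set

variable {X : Type*} [MetricSpace X]

lemma large_mono {X : Type*} [MetricSpace X] {A B : Set X} (h : A ⊆ B) (hA : Large A) :
    Large B := by
  obtain ⟨r, hr, hball⟩ := hA
  refine ⟨r, hr, Set.eq_univ_of_univ_subset ?_⟩
  rw [← hball]
  exact Set.biUnion_subset_biUnion_left h

theorem stmt12 (hX : ¬ Bornology.IsBounded (Set.univ : Set X)) :
    (∀ Y Z : Set X, SmallSet Y → Z ⊆ Y → SmallSet Z) ∧
    (∀ Y Z : Set X, SmallSet Y → SmallSet Z → SmallSet (Y ∪ Z)) := by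
  constructor
  · intro Y Z hY hZY L hL
    exact large_mono (Set.inter_subset_inter_left L (Set.compl_subset_compl.mpr hZY)) (hY L hL)
  · intro Y Z hY hZ L hL
    have h1 : Large (Yᶜ ∩ L) := hY L hL
    have h2 : Large (Zᶜ ∩ (Yᶜ ∩ L)) := hZ _ h1
    have : Zᶜ ∩ (Yᶜ ∩ L) = (Y ∪ Z)ᶜ ∩ L := by
      rw [Set.compl_union]; ext x; simp only [Set.mem_inter_iff, Set.mem_compl_iff]; tauto
    rwa [this] at h2
end

section
/- For every finite partition of an unbounded metric space X, at least one cell of the partition is prethick. -/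
open Metric Bornology Set

variable {X : Type*} [MetricSpace X]

lemma key_split {Y Z : Set X} (hT : Thick (Y ∪ Z)) (hY : ¬ Prethick Y) : Thick Z := by
  intro s hs
  -- B(Y,s) is not thick, so there is t ≥ 0 such that no closed ball of radius t
  -- centered in B(Y,s) is contained in B(Y,s).
  have hnt : ¬ Thick (ballU Y s) := fun h => hY ⟨s, hs, h⟩
  unfold Thick at hnt
  push_neg at hnt
  obtain ⟨t, ht, hball⟩ := hnt
  -- For any x, there is z with dist z x ≤ t and z ∉ B(Y,s).
  have hz : ∀ x : X, ∃ z, dist z x ≤ t ∧ z ∉ ballU Y s := by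
    intro x
    by_cases hx : x ∈ ballU Y s
    · obtain ⟨z, hz1, hz2⟩ := Set.not_subset.mp (hball x hx)
      exact ⟨z, by simpa [Metric.mem_closedBall] using hz1, hz2⟩
    · exact ⟨x, by simp [ht], hx⟩
  obtain ⟨c, -, hc⟩ := hT (s + t) (by linarith)
  obtain ⟨z, hzt, hzY⟩ := hz c
  refine ⟨z, ?_, ?_⟩
  · -- z ∈ Z
    have hzYZ : z ∈ Y ∪ Z := hc (by simpa [Metric.mem_closedBall] using le_trans hzt (by linarith))
    rcases hzYZ with h | h
    · exact absurd (Set.mem_biUnion h (by simp [hs])) hzY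
    · exact h
  · intro w hw
    have hwc : w ∈ Metric.closedBall c (s + t) := by
      simp only [Metric.mem_closedBall] at hw ⊢
      calc dist w c ≤ dist w z + dist z c := dist_triangle _ _ _
        _ ≤ s + t := add_le_add hw hzt
    rcases hc hwc with h | h
    · exact absurd (Set.mem_biUnion h (by simpa [Metric.mem_closedBall, dist_comm] using hw)) hzY
    · exact h

lemma thick_prethick {Y : Set X} (h : Thick Y) : Prethick Y := by
  refine ⟨0, le_refl 0, fun r hr => ?_⟩
  obtain ⟨y, hy, hball⟩ := h r hr
  have hsub : Y ⊆ ballU Y 0 := fun a ha => Set.mem_biUnion ha (by simp)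
  exact ⟨y, hsub hy, fun w hw => hsub (hball hw)⟩

theorem stmt13 (hX : ¬ Bornology.IsBounded (Set.univ : Set X))
    {ι : Type*} [Finite ι] (A : ι → Set X)
    (hdisj : Pairwise (Function.onFun Disjoint A))
    (hcov : (⋃ i, A i) = Set.univ) :
    ∃ i, Prethick (A i) := by
  haveI : Nonempty X := by
    by_contra h
    rw [not_nonempty_iff] at h
    exact hX (by simp [Set.univ_eq_empty_iff.mpr h])
  classical
  haveI : Fintype ι := Fintype.ofFinite ι
  have hthick : Thick (⋃ i ∈ (Finset.univ : Finset ι), A i) := by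
    intro r hr
    obtain ⟨x⟩ := ‹Nonempty X›
    have heq : (⋃ i ∈ (Finset.univ : Finset ι), A i) = Set.univ := by simpa using hcov
    rw [heq]
    exact ⟨x, Set.mem_univ x, Set.subset_univ _⟩
  suffices h : ∀ s : Finset ι, Thick (⋃ i ∈ s, A i) → ∃ i, Prethick (A i) from
    h Finset.univ hthick
  intro s
  induction s using Finset.induction_on with
  | empty =>
    intro h
    obtain ⟨y, hy, -⟩ := h 0 le_rfl
    simp at hy
  | insert a s' ha ih =>
    intro h
    by_cases hpa : Prethick (A a)
    · exact ⟨a, hpa⟩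
    · have : Thick (⋃ i ∈ s', A i) := by
        apply key_split (Y := A a) ?_ hpa
        simpa [Finset.set_biUnion_insert] using h
      exact ih this
end

section
/- A subset Y of X is thin if and only if |Δ_p(Y)| ≤ 1 for every p ∈ X^#, i.e., any two parallel ultrafilters in X^# containing Y are equal. -/
open Metric Bornology Set

variable {X : Type*} [MetricSpace X]

theorem stmt14 (hX : ¬ Bornology.IsBounded (Set.univ : Set X)) (Y : Set X) :
    Thin Y ↔ ∀ p ∈ sharp X, (Delta p Y).Subsingleton := by
  constructor
  · -- thin → subsingleton
    intro hthin p _hp q₁ hq₁ q₂ hq₂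
    obtain ⟨hs₁, hY₁, r₁, hr₁, hpar₁⟩ := hq₁
    obtain ⟨hs₂, hY₂, r₂, hr₂, hpar₂⟩ := hq₂
    obtain ⟨V, hVb, hV⟩ := hthin (r₁ + r₂) (by linarith)
    by_contra hne
    have hVc₁ : Vᶜ ∈ q₁ := Ultrafilter.compl_mem_iff_notMem.2 fun h => hs₁ V h hVb
    have hVc₂ : Vᶜ ∈ q₂ := Ultrafilter.compl_mem_iff_notMem.2 fun h => hs₂ V h hVb
    -- get a set in q₁ whose complement is in q₂
    have hex : ∃ s, s ∈ q₁ ∧ sᶜ ∈ q₂ := by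
      by_contra hc
      push_neg at hc
      refine hne (Ultrafilter.coe_le_coe.1 fun s hs => ?_)
      by_contra hns
      have h1 : sᶜ ∈ q₁ := Ultrafilter.compl_mem_iff_notMem.2 hns
      have h2 := hc sᶜ h1
      rw [compl_compl] at h2
      exact h2 hs
    obtain ⟨A, hA₁, hA₂⟩ := hex
    set A' : Set X := A ∩ (Y \ V) with hA'def
    set B' : Set X := Aᶜ ∩ (Y \ V) with hB'def
    have hA' : A' ∈ q₁ := Filter.inter_mem hA₁ (Filter.inter_mem hY₁ hVc₁)
    have hB' : B' ∈ q₂ := Filter.inter_mem hA₂ (Filter.inter_mem hY₂ hVc₂)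
    set P₀ : Set X := {x | ∃ a ∈ A', dist a x ≤ r₁} with hP₀def
    set P₁ : Set X := {x | ∃ b ∈ B', dist b x ≤ r₂} with hP₁def
    have hP₀ : P₀ ∈ p := by
      by_contra h
      have h1 : ballU P₀ᶜ r₁ ∈ q₁ := hpar₁ _ (Ultrafilter.compl_mem_iff_notMem.2 h)
      obtain ⟨a, hab, haA⟩ := Ultrafilter.nonempty_of_mem (Filter.inter_mem h1 hA')
      simp only [ballU, mem_iUnion] at hab
      obtain ⟨x, hx, hax⟩ := hab
      exact hx ⟨a, haA, mem_closedBall.1 hax⟩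
    have hP₁' : P₁ ∈ p := by
      by_contra h
      have h1 : ballU P₁ᶜ r₂ ∈ q₂ := hpar₂ _ (Ultrafilter.compl_mem_iff_notMem.2 h)
      obtain ⟨b, hbb, hbB⟩ := Ultrafilter.nonempty_of_mem (Filter.inter_mem h1 hB')
      simp only [ballU, mem_iUnion] at hbb
      obtain ⟨x, hx, hbx⟩ := hbb
      exact hx ⟨b, hbB, mem_closedBall.1 hbx⟩
    obtain ⟨x, hx₀, hx₁⟩ := Ultrafilter.nonempty_of_mem (Filter.inter_mem hP₀ hP₁')
    obtain ⟨a, haA', hax⟩ := hx₀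
    obtain ⟨b, hbB', hbx⟩ := hx₁
    have hab : dist b a ≤ r₁ + r₂ := by
      have := dist_triangle b x a
      rw [dist_comm a x] at hax
      calc dist b a ≤ dist b x + dist x a := dist_triangle b x a
        _ ≤ r₂ + r₁ := add_le_add hbx hax
        _ = r₁ + r₂ := by ring
    have hball : closedBall a (r₁ + r₂) ∩ Y = {a} := hV a ⟨haA'.2.1, haA'.2.2⟩
    have hbmem : b ∈ closedBall a (r₁ + r₂) ∩ Y := ⟨mem_closedBall.2 hab, hbB'.2.1⟩
    rw [hball] at hbmem
    have : b = a := hbmem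
    exact hbB'.1 (this ▸ haA'.1)
  · -- not thin → not subsingleton
    intro h
    by_contra hnt
    simp only [Thin, not_forall] at hnt
    obtain ⟨r, hr, hH⟩ := hnt
    push_neg at hH
    have H : ∀ V : Set X, IsBounded V → ∃ y z : X, y ∈ Y ∧ y ∉ V ∧ z ∈ Y ∧ z ≠ y ∧
        dist z y ≤ r := by
      intro V hV
      obtain ⟨y, hy, hne⟩ := hH V hV
      have hsub : {y} ⊆ closedBall y r ∩ Y :=
        singleton_subset_iff.2 ⟨mem_closedBall_self hr, hy.1⟩
      obtain ⟨z, hz, hzne⟩ := exists_of_ssubset (hsub.ssubset_of_ne (Ne.symm hne))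
      exact ⟨y, z, hy.1, hy.2, hz.2, fun e => hzne (by simp [e]), mem_closedBall.1 hz.1⟩
    have hXne : Nonempty X := by
      by_contra he
      exact hX (by simp [Set.univ_eq_empty_iff.2 (not_nonempty_iff.1 he)])
    obtain ⟨x₀⟩ := hXne
    -- chooser
    have pick : ∀ R : ℝ, ∃ yz : X × X, yz.1 ∈ Y ∧ R < dist x₀ yz.1 ∧ yz.2 ∈ Y ∧
        yz.2 ≠ yz.1 ∧ dist yz.2 yz.1 ≤ r := by
      intro R
      obtain ⟨y, z, hy, hyV, hz, hzne, hd⟩ := H (closedBall x₀ R) isBounded_closedBall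
      refine ⟨(y, z), hy, ?_, hz, hzne, hd⟩
      by_contra hle
      push_neg at hle
      exact hyV (mem_closedBall.2 (by rw [dist_comm]; exact hle))
    let t : ℕ → X × X := fun n => Nat.rec (Classical.choose (pick 0))
      (fun _ prev => Classical.choose (pick (dist x₀ prev.1 + 2*r + 1))) n
    set y : ℕ → X := fun n => (t n).1 with hy
    set z : ℕ → X := fun n => (t n).2 with hz
    have ht0 := Classical.choose_spec (pick 0)
    have htS : ∀ n, (t (n+1)).1 ∈ Y ∧ dist x₀ (t n).1 + 2*r + 1 < dist x₀ (t (n+1)).1 ∧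
        (t (n+1)).2 ∈ Y ∧ (t (n+1)).2 ≠ (t (n+1)).1 ∧ dist (t (n+1)).2 (t (n+1)).1 ≤ r :=
      fun n => Classical.choose_spec (pick (dist x₀ (t n).1 + 2*r + 1))
    have hyY : ∀ n, y n ∈ Y := by
      intro n; cases n with
      | zero => exact ht0.1
      | succ m => exact (htS m).1
    have hzY : ∀ n, z n ∈ Y := by
      intro n; cases n with
      | zero => exact ht0.2.2.1
      | succ m => exact (htS m).2.2.1
    have hzne : ∀ n, z n ≠ y n := by
      intro n; cases n with
      | zero => exact ht0.2.2.2.1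
      | succ m => exact (htS m).2.2.2.1
    have hzd : ∀ n, dist (z n) (y n) ≤ r := by
      intro n; cases n with
      | zero => exact ht0.2.2.2.2
      | succ m => exact (htS m).2.2.2.2
    have hstep : ∀ n, dist x₀ (y n) + 2*r + 1 < dist x₀ (y (n+1)) := fun n => (htS n).2.1
    have hmono : ∀ i j, i < j → dist x₀ (y i) + 2*r + 1 ≤ dist x₀ (y j) := by
      intro i j hij
      induction j with
      | zero => omega
      | succ m ih =>
        rcases Nat.lt_succ_iff_lt_or_eq.1 hij with h | h
        · have := hstep m
          have := ih h
          linarith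
        · subst h; exact (hstep i).le
    have hsep : ∀ i j, i ≠ j → 2*r + 1 ≤ dist (y i) (y j) := by
      have key : ∀ i j, i < j → 2*r + 1 ≤ dist (y i) (y j) := by
        intro i j hij
        have h1 := hmono i j hij
        have h2 := dist_triangle x₀ (y i) (y j)
        linarith
      intro i j hij
      rcases lt_or_gt_of_ne hij with h | h
      · exact key i j h
      · rw [dist_comm]; exact key j i h
    have hyunb : ∀ n : ℕ, (n : ℝ) ≤ dist x₀ (y n) := by
      intro n
      induction n with
      | zero => simp [dist_nonneg]
      | succ m ih =>
        have := hstep m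
        push_cast
        linarith
    set A : Set X := Set.range y with hA
    set B : Set X := Set.range z with hB
    have hAunb : ¬ IsBounded A := by
      intro hb
      obtain ⟨R, hR⟩ := hb.subset_closedBall x₀
      obtain ⟨n, hn⟩ := exists_nat_gt R
      have := mem_closedBall.1 (hR ⟨n, rfl⟩)
      rw [dist_comm] at this
      have := hyunb n
      linarith
    have hAB : ∀ i j, y i ≠ z j := by
      intro i j he
      by_cases hij : i = j
      · exact hzne j (by rw [hij] at he; exact he.symm)
      · have h1 := hsep i j hij
        have h2 : dist (y i) (y j) ≤ r := by rw [he]; exact hzd j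
        linarith
    -- the map g
    classical
    let g : X → X := fun x => if h : ∃ n, y n = x then z (Classical.choose h) else x
    have hgy : ∀ n, g (y n) = z n := by
      intro n
      have hinj : Function.Injective y := by
        intro i j hij
        by_contra hne
        have := hsep i j hne
        rw [hij, dist_self] at this
        linarith
      have hex : ∃ m, y m = y n := ⟨n, rfl⟩
      simp only [g, dif_pos hex]
      congr 1
      exact hinj (Classical.choose_spec hex)
    have hgd : ∀ x, dist (g x) x ≤ r := by
      intro x
      by_cases hex : ∃ n, y n = x
      · obtain ⟨n, rfl⟩ := hex
        rw [hgy n]; exact hzd n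
      · simp only [g, dif_neg hex, dist_self]; exact hr
    -- the ultrafilter q₁
    have hne1 : (Bornology.cobounded X ⊓ Filter.principal A).NeBot := by
      rw [Filter.inf_principal_neBot_iff]
      intro U hU
      have hUb : IsBounded Uᶜ := Bornology.isBounded_def.2 (by rwa [compl_compl])
      by_contra hc
      push_neg at hc
      have : A ⊆ Uᶜ := by
        intro a ha haU
        have : a ∈ U ∩ A := ⟨haU, ha⟩
        rw [hc] at this
        exact this
      exact hAunb (hUb.subset this)
    let q₁ : Ultrafilter X := @Ultrafilter.of X (Bornology.cobounded X ⊓ Filter.principal A) hne1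
    have hle : (q₁ : Filter X) ≤ Bornology.cobounded X ⊓ Filter.principal A :=
      Ultrafilter.of_le _
    have hAq₁ : A ∈ q₁ := hle (Filter.mem_inf_of_right (Filter.mem_principal_self A))
    have hq₁sharp : q₁ ∈ sharp X := by
      intro P hP hPb
      have : Pᶜ ∈ q₁ := hle (Filter.mem_inf_of_left (Bornology.isBounded_def.1 hPb))
      exact (Ultrafilter.compl_mem_iff_notMem.1 this) hP
    let q₂ : Ultrafilter X := Ultrafilter.map g q₁
    have hballb : ∀ (P : Set X), IsBounded P → IsBounded (ballU P r) := by
      intro P hP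
      obtain ⟨R, hR⟩ := hP.subset_closedBall x₀
      apply (isBounded_closedBall (x := x₀) (r := R + r)).subset
      intro w hw
      simp only [ballU, mem_iUnion] at hw
      obtain ⟨a, ha, hwa⟩ := hw
      have h1 : dist a x₀ ≤ R := mem_closedBall.1 (hR ha)
      have h2 : dist w a ≤ r := mem_closedBall.1 hwa
      exact mem_closedBall.2 (by calc dist w x₀ ≤ dist w a + dist a x₀ := dist_triangle _ _ _
        _ ≤ r + R := add_le_add h2 h1
        _ = R + r := by ring)
    have hq₂sharp : q₂ ∈ sharp X := by
      intro P hP hPb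
      have hpre : g ⁻¹' P ∈ q₁ := Ultrafilter.mem_map.1 hP
      have hsub : g ⁻¹' P ⊆ ballU P r := by
        intro x hx
        simp only [ballU, mem_iUnion]
        exact ⟨g x, hx, mem_closedBall.2 (by rw [dist_comm]; exact hgd x)⟩
      exact hq₁sharp _ (Filter.mem_of_superset hpre hsub) (hballb P hPb)
    have hYq₁ : Y ∈ q₁ := Filter.mem_of_superset hAq₁ (by
      rintro _ ⟨n, rfl⟩; exact hyY n)
    have hYq₂ : Y ∈ q₂ := Ultrafilter.mem_map.2 (Filter.mem_of_superset hAq₁ (by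
      rintro _ ⟨n, rfl⟩; rw [Set.mem_preimage, hgy n]; exact hzY n))
    have hpar₁ : Par q₁ q₁ := by
      refine ⟨0, le_refl _, fun Q hQ => Filter.mem_of_superset hQ ?_⟩
      intro a ha
      simp only [ballU, mem_iUnion]
      exact ⟨a, ha, mem_closedBall_self le_rfl⟩
    have hpar₂ : Par q₂ q₁ := by
      refine ⟨r, hr, fun Q hQ => Ultrafilter.mem_map.2 (Filter.mem_of_superset hQ ?_)⟩
      intro a ha
      simp only [Set.mem_preimage, ballU, mem_iUnion]
      exact ⟨a, ha, mem_closedBall.2 (hgd a)⟩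
    have h12 : q₁ = q₂ := h q₁ hq₁sharp ⟨hq₁sharp, hYq₁, hpar₁⟩ ⟨hq₂sharp, hYq₂, hpar₂⟩
    -- contradiction: B ∈ q₂ but A ∈ q₁ and A ∩ B = ∅
    have hBq₂ : B ∈ q₂ := Ultrafilter.mem_map.2 (Filter.mem_of_superset hAq₁ (by
      rintro _ ⟨n, rfl⟩; rw [Set.mem_preimage, hgy n]; exact ⟨n, rfl⟩))
    have : A ∩ B ∈ q₁ := Filter.inter_mem hAq₁ (h12 ▸ hBq₂)
    obtain ⟨w, ⟨i, hi⟩, ⟨j, hj⟩⟩ := Ultrafilter.nonempty_of_mem this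
    exact hAB i j (hi.trans hj.symm)
end

section
/- Let Y be a subset of X and suppose there exist two distinct parallel ultrafilters p, q in X^# both containing Y. Then Y is not thin. -/
open Metric Bornology Set

variable {X : Type*} [MetricSpace X]

theorem stmt18 (hX : ¬ Bornology.IsBounded (Set.univ : Set X)) (Y : Set X)
    (p q : Ultrafilter X) (hp : p ∈ sharp X) (hq : q ∈ sharp X)
    (hne : p ≠ q) (hpar : Par p q) (hYp : Y ∈ p) (hYq : Y ∈ q) :
    ¬ Thin Y := by
  intro hthin
  obtain ⟨r, hr0, hball⟩ := hpar
  obtain ⟨V, hV, hVthin⟩ := hthin r hr0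
  -- find A ∈ p with Aᶜ ∈ q
  have hA : ∃ A : Set X, A ∈ p ∧ Aᶜ ∈ q := by
    by_contra h
    push_neg at h
    apply hne
    rw [← Ultrafilter.coe_le_coe]
    intro s hs
    have hsp : s ∈ p := by
      by_contra hsp
      have : sᶜ ∈ p := (Ultrafilter.compl_mem_iff_notMem).2 hsp
      have := h _ this
      rw [compl_compl] at this
      exact this hs
    exact hsp
  obtain ⟨A, hAp, hAq⟩ := hA
  have hVq : Vᶜ ∈ q := (Ultrafilter.compl_mem_iff_notMem).2 fun hVq => hq V hVq hV
  have hQ : Y ∩ Vᶜ ∩ Aᶜ ∈ q := Filter.inter_mem (Filter.inter_mem hYq hVq) hAq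
  have hP : ballU (Y ∩ Vᶜ ∩ Aᶜ) r ∩ (Y ∩ A) ∈ p :=
    Filter.inter_mem (hball _ hQ) (Filter.inter_mem hYp hAp)
  obtain ⟨x, hx⟩ := Filter.nonempty_of_mem hP
  obtain ⟨hxB, hxY, hxA⟩ := hx
  simp only [ballU, Set.mem_iUnion, exists_prop] at hxB
  obtain ⟨y, ⟨⟨hyY, hyV⟩, hyA⟩, hxy⟩ := hxB
  have : x = y := by
    have h1 := hVthin y ⟨hyY, hyV⟩
    have : x ∈ Metric.closedBall y r ∩ Y := ⟨hxy, hxY⟩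
    rw [h1] at this
    exact this
  exact hyA (this ▸ hxA)
end
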